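/- Assume there is no label shift between P^(1) and P^T. Let h_inv = g_inv∘φ_inv with g_inv ∈ G and φ_inv ∈ Φ (not necessarily conditionally invariant). Then for every classifier h : R^p → {1,…,L}: | [R^T(h) − R^(1)(h)] − [P(h(X^T) ≠ h_inv(X^T)) − P(h(X^(1)) ≠ h_inv(X^(1)))] | ≤ 2·R^(1)(h_inv) + L·Ψ_{G,φ_inv}. -/

import Mathlib

open MeasureTheory ProbabilityTheory

noncomputable section

/-- Covariate space `ℝ^n`. -/
abbrev Vec (n : ℕ) := Fin n → ℝ

/-- 0-1 population risk of a classifier `h` under a joint distribution on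
covariates and labels. -/
def risk {p L : ℕ} (P : Measure (Vec p × Fin L)) (h : Vec p → Fin L) : ℝ :=
  (P {z | h z.1 ≠ z.2}).toReal

/-- Importance-weighted population risk `E[ω_Y · 1{h(X) ≠ Y}]`. -/
def wrisk {p L : ℕ} (P : Measure (Vec p × Fin L)) (h : Vec p → Fin L) (ω : Fin L → ℝ) : ℝ :=
  ∫ z, ω z.2 * (if h z.1 ≠ z.2 then (1:ℝ) else 0) ∂P

/-- Conditional law of `φ(X)` given `Y = y`. -/
def condLaw {p L : ℕ} {α : Type*} [MeasurableSpace α]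
    (P : Measure (Vec p × Fin L)) (φ : Vec p → α) (y : Fin L) : Measure α :=
  (P[|{z | z.2 = y}]).map (fun z => φ z.1)

/-- `G`-divergence between two distributions on `ℝ^q`. -/
def Gdiv {q L : ℕ} (G : Set (Vec q → Fin L)) (P Q : Measure (Vec q)) : ℝ :=
  ⨆ g : G, ⨆ y : Fin L, |(P {z | g.1 z = y}).toReal - (Q {z | g.1 z = y}).toReal|

/-- Deviation from conditional invariance of a feature map `φ`. -/
def Psi {p q L M : ℕ} (G : Set (Vec q → Fin L))
    (PT : Measure (Vec p × Fin L)) (Ps : Fin M → Measure (Vec p × Fin L))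
    (φ : Vec p → Vec q) : ℝ :=
  ⨆ m : Fin M, ⨆ y : Fin L, Gdiv G (condLaw PT φ y) (condLaw (Ps m) φ y)

/-- True importance weights `w^(m)_j = P(Y^T = j)/P(Y^(m) = j)`. -/
def trueW {p L M : ℕ} (PT : Measure (Vec p × Fin L)) (Ps : Fin M → Measure (Vec p × Fin L))
    (m : Fin M) (j : Fin L) : ℝ :=
  (PT {z | z.2 = j}).toReal / ((Ps m) {z | z.2 = j}).toReal

/-- Sup norm on `ℝ^L`. -/
def supNorm {L : ℕ} (v : Fin L → ℝ) : ℝ := ⨆ j : Fin L, |v j|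

section Aux

variable {α : Type*} [MeasurableSpace α]

lemma abs_toReal_sub_le (μ : Measure α) [IsFiniteMeasure μ] {A B E : Set α}
    (h1 : A \ B ⊆ E) (h2 : B \ A ⊆ E) :
    |(μ A).toReal - (μ B).toReal| ≤ (μ E).toReal := by
  have key : ∀ S T : Set α, S \ T ⊆ E → μ S ≤ μ T + μ E := by
    intro S T hST
    calc μ S ≤ μ (T ∪ (S \ T)) := measure_mono (by
            intro x hx
            by_cases hxT : x ∈ T
            · exact Or.inl hxT
            · exact Or.inr ⟨hx, hxT⟩)
      _ ≤ μ T + μ (S \ T) := measure_union_le _ _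
      _ ≤ μ T + μ E := add_le_add le_rfl (measure_mono hST)
  have hA := key A B h1
  have hB := key B A h2
  rw [abs_sub_le_iff]
  constructor
  · have := ENNReal.toReal_mono (by finiteness) hA
    rw [ENNReal.toReal_add (by finiteness) (by finiteness)] at this
    linarith
  · have := ENNReal.toReal_mono (by finiteness) hB
    rw [ENNReal.toReal_add (by finiteness) (by finiteness)] at this
    linarith

end Aux

section Aux2

variable {p q L M : ℕ}

lemma measurableSet_fiber (y : Fin L) :
    MeasurableSet {z : Vec p × Fin L | z.2 = y} := by
  have : {z : Vec p × Fin L | z.2 = y} = Prod.snd ⁻¹' {y} := by ext z; simp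
  rw [this]; exact measurable_snd (MeasurableSet.singleton y)

lemma measure_fiber_sum (μ : Measure (Vec p × Fin L)) [IsFiniteMeasure μ]
    {A : Set (Vec p × Fin L)} (hA : MeasurableSet A) :
    (μ A).toReal = ∑ y : Fin L, (μ (A ∩ {z | z.2 = y})).toReal := by
  have hmeas : ∀ y : Fin L, MeasurableSet (A ∩ {z : Vec p × Fin L | z.2 = y}) :=
    fun y => hA.inter (measurableSet_fiber y)
  have hdec : A = ⋃ y : Fin L, A ∩ {z | z.2 = y} := by
    ext z; simp
  have hdisj : Pairwise (Function.onFun Disjoint fun y : Fin L => A ∩ {z | z.2 = y}) := by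
    intro y y' hyy'
    refine Set.disjoint_left.mpr ?_
    rintro z ⟨_, hz⟩ ⟨_, hz'⟩
    have hz1 : z.2 = y := hz
    have hz2 : z.2 = y' := hz'
    exact hyy' (hz1.symm.trans hz2)
  have hiu := measure_iUnion hdisj hmeas (μ := μ)
  rw [← hdec] at hiu
  rw [hiu, tsum_fintype, ENNReal.toReal_sum]
  intro y _; finiteness

lemma cond_univ_le_one (P : Measure (Vec p × Fin L)) [IsProbabilityMeasure P] (y : Fin L) :
    (P[|{z : Vec p × Fin L | z.2 = y}]) Set.univ ≤ 1 := by
  rcases eq_or_ne (P {z : Vec p × Fin L | z.2 = y}) 0 with h0 | h0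
  · rw [cond_eq_zero_of_meas_eq_zero h0]; simp
  · haveI := cond_isProbabilityMeasure (μ := P) (s := {z : Vec p × Fin L | z.2 = y}) h0
    exact prob_le_one

lemma condLaw_apply_le_one (P : Measure (Vec p × Fin L)) [IsProbabilityMeasure P]
    {φ : Vec p → Vec q} (hφ : Measurable φ) (y : Fin L) (A : Set (Vec q)) :
    ((condLaw P φ y) A).toReal ≤ 1 := by
  have hf : Measurable (fun z : Vec p × Fin L => φ z.1) := hφ.comp measurable_fst
  have huniv : (condLaw P φ y) Set.univ ≤ 1 := by
    rw [condLaw, Measure.map_apply hf MeasurableSet.univ, Set.preimage_univ]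
    exact cond_univ_le_one P y
  have hle : (condLaw P φ y) A ≤ 1 :=
    (measure_mono (Set.subset_univ A)).trans huniv
  have := ENNReal.toReal_mono ENNReal.one_ne_top hle
  simpa using this

lemma Gdiv_nonneg (G : Set (Vec q → Fin L)) (P Q : Measure (Vec q)) :
    0 ≤ Gdiv G P Q := by
  apply Real.iSup_nonneg; intro g
  apply Real.iSup_nonneg; intro y
  exact abs_nonneg _

lemma Psi_nonneg (G : Set (Vec q → Fin L)) (PT : Measure (Vec p × Fin L))
    (Ps : Fin M → Measure (Vec p × Fin L)) (φ : Vec p → Vec q) :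
    0 ≤ Psi G PT Ps φ := by
  apply Real.iSup_nonneg; intro m
  apply Real.iSup_nonneg; intro y
  exact Gdiv_nonneg _ _ _

lemma Gdiv_condLaw_le_one (G : Set (Vec q → Fin L))
    (P Q : Measure (Vec p × Fin L)) [IsProbabilityMeasure P] [IsProbabilityMeasure Q]
    {φ : Vec p → Vec q} (hφ : Measurable φ) (y : Fin L) :
    Gdiv G (condLaw P φ y) (condLaw Q φ y) ≤ 1 := by
  apply Real.iSup_le _ one_pos.le
  intro g
  apply Real.iSup_le _ one_pos.le
  intro y'
  rw [abs_sub_le_iff]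
  constructor
  · have h1 := condLaw_apply_le_one P hφ y {z | g.1 z = y'}
    have h2 := ENNReal.toReal_nonneg (a := (condLaw Q φ y) {z | g.1 z = y'})
    linarith
  · have h1 := condLaw_apply_le_one Q hφ y {z | g.1 z = y'}
    have h2 := ENNReal.toReal_nonneg (a := (condLaw P φ y) {z | g.1 z = y'})
    linarith

/-- The specific term is below the `G`-divergence, provided all terms are bounded by 1. -/
lemma le_Gdiv {G : Set (Vec q → Fin L)} {P Q : Measure (Vec q)}
    (hP : ∀ A, (P A).toReal ≤ 1) (hQ : ∀ A, (Q A).toReal ≤ 1)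
    {ginv : Vec q → Fin L} (hg : ginv ∈ G) (y : Fin L) :
    |(P {z | ginv z = y}).toReal - (Q {z | ginv z = y}).toReal| ≤ Gdiv G P Q := by
  have hbnd : ∀ (g : G) (y' : Fin L),
      |(P {z | g.1 z = y'}).toReal - (Q {z | g.1 z = y'}).toReal| ≤ 1 := by
    intro g y'
    rw [abs_sub_le_iff]
    constructor
    · have := hP {z | g.1 z = y'}
      have := ENNReal.toReal_nonneg (a := Q {z | g.1 z = y'})
      linarith
    · have := hQ {z | g.1 z = y'}
      have := ENNReal.toReal_nonneg (a := P {z | g.1 z = y'})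
      linarith
  have step1 : |(P {z | ginv z = y}).toReal - (Q {z | ginv z = y}).toReal| ≤
      ⨆ y' : Fin L, |(P {z | ginv z = y'}).toReal - (Q {z | ginv z = y'}).toReal| :=
    le_ciSup (f := fun y' : Fin L =>
      |(P {z | ginv z = y'}).toReal - (Q {z | ginv z = y'}).toReal|)
      (Set.Finite.bddAbove (Set.finite_range _)) y
  refine step1.trans ?_
  refine le_ciSup (f := fun g : G => ⨆ y' : Fin L,
      |(P {z | g.1 z = y'}).toReal - (Q {z | g.1 z = y'}).toReal|) ?_ ⟨ginv, hg⟩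
  exact ⟨1, by rintro x ⟨g, rfl⟩; exact Real.iSup_le (fun y' => hbnd g y') one_pos.le⟩

/-- Key identity: probability of misclassifying on a label fiber, expressed via
the conditional law of the features. -/
lemma measure_inter_fiber_eq (μ : Measure (Vec p × Fin L)) [IsProbabilityMeasure μ]
    {ginv : Vec q → Fin L} (hg : Measurable ginv)
    {φ : Vec p → Vec q} (hφ : Measurable φ) (y : Fin L)
    (hc : μ {z : Vec p × Fin L | z.2 = y} ≠ 0) :
    μ ({z | ginv (φ z.1) ≠ z.2} ∩ {z | z.2 = y}) =
      μ {z : Vec p × Fin L | z.2 = y} * (condLaw μ φ y) {v | ginv v ≠ y} := by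
  have hfib := measurableSet_fiber (p := p) y
  have hf : Measurable (fun z : Vec p × Fin L => φ z.1) := hφ.comp measurable_fst
  have hS : MeasurableSet {v : Vec q | ginv v ≠ y} := by
    have : {v : Vec q | ginv v ≠ y} = (ginv ⁻¹' {y})ᶜ := by ext v; simp
    rw [this]; exact (hg (MeasurableSet.singleton y)).compl
  rw [condLaw, Measure.map_apply hf hS, cond_apply hfib]
  have hset : {z : Vec p × Fin L | z.2 = y} ∩ ((fun z : Vec p × Fin L => φ z.1) ⁻¹' {v | ginv v ≠ y})
      = {z | ginv (φ z.1) ≠ z.2} ∩ {z | z.2 = y} := by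
    ext z
    simp only [Set.mem_inter_iff, Set.mem_setOf_eq, Set.mem_preimage]
    constructor
    · rintro ⟨h1, h2⟩; exact ⟨by rw [h1]; exact h2, h1⟩
    · rintro ⟨h1, h2⟩; exact ⟨h2, by rw [← h2]; exact h1⟩
  rw [hset, ← mul_assoc, ENNReal.mul_inv_cancel hc (measure_ne_top μ _), one_mul]

end Aux2

/-- **Generalized Theorem 4.1 (Appendix C.1)**: for `h_inv = g_inv ∘ φ_inv` not necessarily
conditionally invariant, the bound acquires the extra term `L · Ψ_{G, φ_inv}`. -/
theorem statement8 {p q L M : ℕ} [NeZero M]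
    (PT : Measure (Vec p × Fin L)) [IsProbabilityMeasure PT]
    (Ps : Fin M → Measure (Vec p × Fin L)) [∀ m, IsProbabilityMeasure (Ps m)]
    (hNoLabelShift : ∀ y : Fin L, (Ps 0) {z | z.2 = y} = PT {z | z.2 = y})
    (G : Set (Vec q → Fin L)) (Φ : Set (Vec p → Vec q))
    (ginv : Vec q → Fin L) (hginv : ginv ∈ G) (hginvMeas : Measurable ginv)
    (φinv : Vec p → Vec q) (hφinv : φinv ∈ Φ) (hφinvMeas : Measurable φinv)
    (h : Vec p → Fin L) (hMeas : Measurable h) :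
    |(risk PT h - risk (Ps 0) h) -
        ((PT {z | h z.1 ≠ ginv (φinv z.1)}).toReal -
          ((Ps 0) {z | h z.1 ≠ ginv (φinv z.1)}).toReal)| ≤
      2 * risk (Ps 0) (fun x => ginv (φinv x)) + L * Psi G PT Ps φinv := by
  classical
  set Eh : Set (Vec p × Fin L) := {z | h z.1 ≠ z.2} with hEh
  set Ei : Set (Vec p × Fin L) := {z | ginv (φinv z.1) ≠ z.2} with hEi
  set D : Set (Vec p × Fin L) := {z | h z.1 ≠ ginv (φinv z.1)} with hD
  have hhinvMeas : Measurable (fun z : Vec p × Fin L => ginv (φinv z.1)) :=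
    (hginvMeas.comp hφinvMeas).comp measurable_fst
  have hEiMeas : MeasurableSet Ei := by
    have : Ei = {z : Vec p × Fin L | ginv (φinv z.1) = z.2}ᶜ := by ext z; simp [hEi]
    rw [this]
    exact (measurableSet_eq_fun hhinvMeas measurable_snd).compl
  -- Step A: pointwise surrogate comparison
  have hsubset1 : Eh \ D ⊆ Ei := by
    rintro z ⟨hz1, hz2⟩
    have hz1' : h z.1 ≠ z.2 := hz1
    have hz2' : h z.1 = ginv (φinv z.1) := not_not.mp hz2
    show ginv (φinv z.1) ≠ z.2
    rw [← hz2']; exact hz1'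
  have hsubset2 : D \ Eh ⊆ Ei := by
    rintro z ⟨hz1, hz2⟩
    have hz1' : h z.1 ≠ ginv (φinv z.1) := hz1
    have hz2' : h z.1 = z.2 := not_not.mp hz2
    show ginv (φinv z.1) ≠ z.2
    rw [← hz2']; exact fun hh => hz1' hh.symm
  have stepA_T : |(PT Eh).toReal - (PT D).toReal| ≤ (PT Ei).toReal :=
    abs_toReal_sub_le PT hsubset1 hsubset2
  have stepA_1 : |((Ps 0) Eh).toReal - ((Ps 0) D).toReal| ≤ ((Ps 0) Ei).toReal :=
    abs_toReal_sub_le (Ps 0) hsubset1 hsubset2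
  -- Step B: (PT Ei).toReal - ((Ps 0) Ei).toReal ≤ L * Psi
  have hPsi0 : 0 ≤ Psi G PT Ps φinv := Psi_nonneg G PT Ps φinv
  have stepB : (PT Ei).toReal - ((Ps 0) Ei).toReal ≤ L * Psi G PT Ps φinv := by
    rw [measure_fiber_sum PT hEiMeas, measure_fiber_sum (Ps 0) hEiMeas, ← Finset.sum_sub_distrib]
    have hterm : ∀ y : Fin L,
        (PT (Ei ∩ {z | z.2 = y})).toReal - ((Ps 0) (Ei ∩ {z | z.2 = y})).toReal ≤
          Psi G PT Ps φinv := by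
      intro y
      rcases eq_or_ne (PT {z : Vec p × Fin L | z.2 = y}) 0 with hc0 | hc0
      · have h1 : PT (Ei ∩ {z | z.2 = y}) = 0 :=
          measure_mono_null Set.inter_subset_right hc0
        have h2 : (Ps 0) (Ei ∩ {z | z.2 = y}) = 0 :=
          measure_mono_null Set.inter_subset_right (by rw [hNoLabelShift y]; exact hc0)
        rw [h1, h2]; simpa using hPsi0
      · have hc0' : (Ps 0) {z : Vec p × Fin L | z.2 = y} ≠ 0 := by
          rw [hNoLabelShift y]; exact hc0
        have hkeyT := measure_inter_fiber_eq PT hginvMeas hφinvMeas y hc0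
        have hkey1 := measure_inter_fiber_eq (Ps 0) hginvMeas hφinvMeas y hc0'
        -- conditional laws are probability measures here
        haveI hprobT : IsProbabilityMeasure (PT[|{z : Vec p × Fin L | z.2 = y}]) :=
          cond_isProbabilityMeasure hc0
        haveI hprob1 : IsProbabilityMeasure ((Ps 0)[|{z : Vec p × Fin L | z.2 = y}]) :=
          cond_isProbabilityMeasure hc0'
        have hf : Measurable (fun z : Vec p × Fin L => φinv z.1) :=
          hφinvMeas.comp measurable_fst
        haveI hmT : IsProbabilityMeasure (condLaw PT φinv y) := by
          rw [condLaw]; exact Measure.isProbabilityMeasure_map hf.aemeasurable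
        haveI hm1 : IsProbabilityMeasure (condLaw (Ps 0) φinv y) := by
          rw [condLaw]; exact Measure.isProbabilityMeasure_map hf.aemeasurable
        set c : ℝ := (PT {z : Vec p × Fin L | z.2 = y}).toReal with hcdef
        have hc01 : 0 ≤ c := ENNReal.toReal_nonneg
        have hc11 : c ≤ 1 := by
          rw [hcdef]
          exact ENNReal.toReal_le_of_le_ofReal one_pos.le (by simpa using prob_le_one)
        have hinterEq : Ei ∩ {z : Vec p × Fin L | z.2 = y} =
            {z : Vec p × Fin L | ginv (φinv z.1) ≠ z.2} ∩ {z | z.2 = y} := by rw [hEi]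
        -- set of misclassified features
        have hSmeas : MeasurableSet {v : Vec q | ginv v = y} :=
          hginvMeas (MeasurableSet.singleton y)
        have hcomplT : ((condLaw PT φinv y) {v | ginv v ≠ y}).toReal =
            1 - ((condLaw PT φinv y) {v | ginv v = y}).toReal := by
          have : {v : Vec q | ginv v ≠ y} = {v : Vec q | ginv v = y}ᶜ := by ext v; simp
          rw [this, prob_compl_eq_one_sub hSmeas,
            ENNReal.toReal_sub_of_le prob_le_one ENNReal.one_ne_top, ENNReal.toReal_one]
        have hcompl1 : ((condLaw (Ps 0) φinv y) {v | ginv v ≠ y}).toReal =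
            1 - ((condLaw (Ps 0) φinv y) {v | ginv v = y}).toReal := by
          have : {v : Vec q | ginv v ≠ y} = {v : Vec q | ginv v = y}ᶜ := by ext v; simp
          rw [this, prob_compl_eq_one_sub hSmeas,
            ENNReal.toReal_sub_of_le prob_le_one ENNReal.one_ne_top, ENNReal.toReal_one]
        have htT : (PT (Ei ∩ {z | z.2 = y})).toReal =
            c * ((condLaw PT φinv y) {v | ginv v ≠ y}).toReal := by
          rw [hinterEq, hkeyT, ENNReal.toReal_mul]
        have ht1 : ((Ps 0) (Ei ∩ {z | z.2 = y})).toReal =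
            c * ((condLaw (Ps 0) φinv y) {v | ginv v ≠ y}).toReal := by
          rw [hinterEq, hkey1, ENNReal.toReal_mul, hNoLabelShift y]
        set aT : ℝ := ((condLaw PT φinv y) {v | ginv v = y}).toReal
        set a1 : ℝ := ((condLaw (Ps 0) φinv y) {v | ginv v = y}).toReal
        have hdiff : (PT (Ei ∩ {z | z.2 = y})).toReal -
            ((Ps 0) (Ei ∩ {z | z.2 = y})).toReal = c * (a1 - aT) := by
          rw [htT, ht1, hcomplT, hcompl1]; ring
        have habs : |aT - a1| ≤ Gdiv G (condLaw PT φinv y) (condLaw (Ps 0) φinv y) :=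
          le_Gdiv (fun A => condLaw_apply_le_one PT hφinvMeas y A)
            (fun A => condLaw_apply_le_one (Ps 0) hφinvMeas y A) hginv y
        have hGP : Gdiv G (condLaw PT φinv y) (condLaw (Ps 0) φinv y) ≤
            Psi G PT Ps φinv := by
          have hinner : Gdiv G (condLaw PT φinv y) (condLaw (Ps 0) φinv y) ≤
              ⨆ y' : Fin L, Gdiv G (condLaw PT φinv y') (condLaw (Ps 0) φinv y') :=
            le_ciSup (f := fun y' : Fin L =>
              Gdiv G (condLaw PT φinv y') (condLaw (Ps 0) φinv y'))
              (Set.Finite.bddAbove (Set.finite_range _)) y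
          refine hinner.trans ?_
          refine le_ciSup (f := fun m : Fin M =>
            ⨆ y' : Fin L, Gdiv G (condLaw PT φinv y') (condLaw (Ps m) φinv y')) ?_ 0
          refine ⟨1, ?_⟩
          rintro x ⟨m, rfl⟩
          exact Real.iSup_le
            (fun y' => Gdiv_condLaw_le_one G PT (Ps m) hφinvMeas y') one_pos.le
        have hfinal : c * (a1 - aT) ≤ Psi G PT Ps φinv := by
          have h1 : |a1 - aT| ≤ Psi G PT Ps φinv := by
            rw [abs_sub_comm]; exact habs.trans hGP
          have h2 : a1 - aT ≤ |a1 - aT| := le_abs_self _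
          nlinarith [abs_nonneg (a1 - aT)]
        rw [hdiff]; exact hfinal
    calc (∑ y : Fin L, ((PT (Ei ∩ {z | z.2 = y})).toReal -
            ((Ps 0) (Ei ∩ {z | z.2 = y})).toReal))
        ≤ ∑ _y : Fin L, Psi G PT Ps φinv := Finset.sum_le_sum (fun y _ => hterm y)
      _ = L * Psi G PT Ps φinv := by
          simp [Finset.sum_const, Finset.card_univ]
  -- assemble
  have hriskT : risk PT h = (PT Eh).toReal := rfl
  have hrisk1 : risk (Ps 0) h = ((Ps 0) Eh).toReal := rfl
  have hriskinv : risk (Ps 0) (fun x => ginv (φinv x)) = ((Ps 0) Ei).toReal := rfl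
  rw [hriskT, hrisk1, hriskinv]
  have key : |((PT Eh).toReal - ((Ps 0) Eh).toReal) - ((PT D).toReal - ((Ps 0) D).toReal)| ≤
      (PT Ei).toReal + ((Ps 0) Ei).toReal := by
    have : ((PT Eh).toReal - ((Ps 0) Eh).toReal) - ((PT D).toReal - ((Ps 0) D).toReal) =
        ((PT Eh).toReal - (PT D).toReal) - (((Ps 0) Eh).toReal - ((Ps 0) D).toReal) := by ring
    rw [this]
    exact (abs_sub _ _).trans (add_le_add stepA_T (by rwa [abs_sub_comm] at stepA_1 ⊢))
  refine key.trans ?_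
  linarith
end
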